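/- Every vertex-transitive quantum graph R ≤ M_n(ℂ) is regular. -/

import Mathlib

namespace QG

open Matrix

abbrev Mat (n : ℕ) := Matrix (Fin n) (Fin n) ℂ

/-- `R` is a quantum graph: closed under conjugate transpose and every element is traceless. -/
def IsQuantumGraph {n : ℕ} (R : Submodule ℂ (Mat n)) : Prop :=
  ∀ a ∈ R, aᴴ ∈ R ∧ a.trace = 0

/-- Conjugation `a ↦ u * a * uᴴ` as a linear map. -/
noncomputable def conjMap {n : ℕ} (u : Mat n) : Mat n →ₗ[ℂ] Mat n :=
  (LinearMap.mulLeft ℂ u).comp (LinearMap.mulRight ℂ uᴴ)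

/-- The stabilizer of `R`: unitaries `u` with `u R uᴴ = R`. -/
def Stab {n : ℕ} (R : Submodule ℂ (Mat n)) : Set (Mat n) :=
  {u | u ∈ Matrix.unitaryGroup (Fin n) ℂ ∧ R.map (conjMap u) = R}

/-- `R` is vertex-transitive if the ℂ-linear span of `Stab R` is all of `M_n(ℂ)`. -/
def IsVertexTransitive {n : ℕ} (R : Submodule ℂ (Mat n)) : Prop :=
  Submodule.span ℂ (Stab R) = ⊤

/-- `a : Fin d → Mat n` is an orthonormal basis of `R` with respect to the normalized
trace inner product `⟨a, b⟩ = tr(aᴴ b) / n`. -/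
def IsONBasis {n d : ℕ} (R : Submodule ℂ (Mat n)) (a : Fin d → Mat n) : Prop :=
  (∀ i, a i ∈ R) ∧ Submodule.span ℂ (Set.range a) = R ∧
    ∀ i j, ((a i)ᴴ * a j).trace / (n : ℂ) = if i = j then 1 else 0

/-- `R` is regular: its degree matrix `∑ aᵢ aᵢᴴ` (for an orthonormal basis, independent of
the choice) is a scalar multiple of the identity. -/
def IsRegular {n : ℕ} (R : Submodule ℂ (Mat n)) : Prop :=
  ∃ (d : ℕ) (a : Fin d → Mat n), IsONBasis R a ∧
    ∃ c : ℂ, (∑ i, a i * (a i)ᴴ) = c • (1 : Mat n)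

/-- The identification of `Mat n` with Euclidean space. -/
noncomputable def matEquiv (n : ℕ) : Mat n ≃ₗ[ℂ] EuclideanSpace ℂ (Fin n × Fin n) where
  toFun a := WithLp.toLp 2 (fun p : Fin n × Fin n => a p.1 p.2)
  map_add' _ _ := rfl
  map_smul' _ _ := rfl
  invFun x := fun i j => x (i, j)
  left_inv _ := rfl
  right_inv _ := rfl

lemma matEquiv_inner {n : ℕ} (a b : Mat n) :
    inner ℂ (matEquiv n a) (matEquiv n b) = (aᴴ * b).trace := by
  rw [PiLp.inner_apply]
  simp only [RCLike.inner_apply, Matrix.trace, Matrix.diag, Matrix.mul_apply,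
    Matrix.conjTranspose_apply, Fintype.sum_prod_type]
  rw [Finset.sum_comm]
  exact Finset.sum_congr rfl fun _ _ => Finset.sum_congr rfl fun _ _ => mul_comm _ _

/-- Every submodule of `Mat n` has an orthonormal basis for the normalized trace
inner product. -/
lemma exists_onb {n : ℕ} (R : Submodule ℂ (Mat n)) :
    ∃ (d : ℕ) (a : Fin d → Mat n), IsONBasis R a := by
  rcases Nat.eq_zero_or_pos n with hn | hn
  · subst hn
    refine ⟨0, Fin.elim0, fun i => i.elim0, ?_, fun i => i.elim0⟩
    rw [Set.range_eq_empty, Submodule.span_empty]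
    exact Subsingleton.elim _ _
  · set e := matEquiv n
    set S := R.map e.toLinearMap with hS
    set b := stdOrthonormalBasis ℂ S
    set d := Module.finrank ℂ S
    set c : ℂ := (Real.sqrt n : ℂ) with hc
    have hc0 : c ≠ 0 := by
      simp [hc, Complex.ofReal_eq_zero, Real.sqrt_eq_zero, hn.ne', Nat.cast_nonneg]
    set f : Fin d → Mat n := fun i => e.symm (b i : EuclideanSpace ℂ (Fin n × Fin n)) with hf
    have hfR : ∀ i, f i ∈ R := by
      intro i
      have : (b i : EuclideanSpace ℂ (Fin n × Fin n)) ∈ S := (b i).2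
      obtain ⟨r, hr, hre⟩ := this
      simpa [hf, ← hre] using hr
    have hspanf : Submodule.span ℂ (Set.range f) = R := by
      have h1 : Submodule.span ℂ (Set.range fun i => (b i : EuclideanSpace ℂ (Fin n × Fin n))) = S := by
        have := b.toBasis.span_eq
        have h2 := congrArg (Submodule.map S.subtype) this
        rw [Submodule.map_span, Submodule.map_subtype_top] at h2
        have hset : ⇑S.subtype '' Set.range ⇑b.toBasis
            = Set.range fun i => (b i : EuclideanSpace ℂ (Fin n × Fin n)) := by
          ext x; simp [Set.range_comp]
        rw [hset] at h2
        exact h2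
      have h3 := congrArg (Submodule.map e.symm.toLinearMap) h1
      rw [Submodule.map_span] at h3
      have h4 : e.symm.toLinearMap '' (Set.range fun i => (b i : EuclideanSpace ℂ (Fin n × Fin n))) = Set.range f := by
        rw [← Set.range_comp]; rfl
      rw [h4] at h3
      rw [h3, hS]
      ext x
      constructor
      · rintro ⟨y, ⟨r, hr, rfl⟩, rfl⟩
        simpa using hr
      · intro hx
        exact ⟨e x, ⟨x, hx, rfl⟩, by simp⟩
    refine ⟨d, fun i => c • f i, fun i => R.smul_mem c (hfR i), ?_, ?_⟩
    · apply le_antisymm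
      · rw [Submodule.span_le, Set.range_subset_iff]
        exact fun i => R.smul_mem c (hfR i)
      · rw [← hspanf, Submodule.span_le, Set.range_subset_iff]
        intro i
        have : f i = c⁻¹ • (c • f i) := by rw [smul_smul, inv_mul_cancel₀ hc0, one_smul]
        rw [this]
        exact Submodule.smul_mem _ _ (Submodule.subset_span ⟨i, rfl⟩)
    · intro i j
      have key : ((f i)ᴴ * f j).trace = if i = j then 1 else 0 := by
        have := matEquiv_inner (f i) (f j)
        rw [hf] at this ⊢
        simp only [e, LinearEquiv.apply_symm_apply] at this ⊢
        rw [← this, ← Submodule.coe_inner, orthonormal_iff_ite.mp b.orthonormal]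
      rw [Matrix.conjTranspose_smul, Matrix.smul_mul, Matrix.mul_smul, Matrix.trace_smul,
        Matrix.trace_smul, smul_smul, smul_eq_mul, key]
      have hcc : star c * c = (n : ℂ) := by
        rw [hc, Complex.star_def, Complex.conj_ofReal, ← Complex.ofReal_mul,
          Real.mul_self_sqrt (Nat.cast_nonneg n)]
        push_cast; ring
      rw [hcc]
      rw [mul_div_assoc]
      have hn' : (n : ℂ) ≠ 0 := Nat.cast_ne_zero.mpr hn.ne'
      field_simp

lemma inner_expand {n d : ℕ} (a : Fin d → Mat n)
    (ha : ∀ i j, ((a i)ᴴ * a j).trace / (n : ℂ) = if i = j then 1 else 0)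
    (s t : Fin d → ℂ) :
    ((∑ i, s i • a i)ᴴ * (∑ j, t j • a j)).trace / (n : ℂ) = ∑ i, star (s i) * t i := by
  have h1 : ((∑ i, s i • a i)ᴴ * (∑ j, t j • a j)).trace
      = ∑ i, ∑ j, (star (s i) * t j) * ((a i)ᴴ * a j).trace := by
    rw [Matrix.conjTranspose_sum]
    simp only [Matrix.conjTranspose_smul, Finset.sum_mul, Finset.mul_sum,
      Matrix.smul_mul, Matrix.mul_smul, Matrix.trace_sum, Matrix.trace_smul,
      smul_smul, smul_eq_mul]
    rw [Finset.sum_comm]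
    exact Finset.sum_congr rfl fun i _ => Finset.sum_congr rfl fun j _ => by ring
  rw [h1]
  simp_rw [Finset.sum_div, mul_div_assoc, ha]
  simp [mul_ite, Finset.sum_ite_eq]

/-- The degree matrix is independent of the choice of orthonormal basis. -/
lemma deg_eq {n d : ℕ} {R : Submodule ℂ (Mat n)} {a b : Fin d → Mat n}
    (ha : IsONBasis R a) (hb : IsONBasis R b) :
    ∑ i, b i * (b i)ᴴ = ∑ i, a i * (a i)ᴴ := by
  obtain ⟨haR, haspan, ha3⟩ := ha
  obtain ⟨hbR, hbspan, hb3⟩ := hb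
  have hmem : ∀ j, b j ∈ Submodule.span ℂ (Set.range a) := fun j => haspan ▸ hbR j
  have hcoef : ∀ j, ∃ C : Fin d → ℂ, ∑ i, C i • a i = b j := by
    intro j
    exact (Submodule.mem_span_range_iff_exists_fun ℂ).mp (hmem j)
  choose C hC using hcoef
  set M : Matrix (Fin d) (Fin d) ℂ := Matrix.of C with hM
  have hMM : M * Mᴴ = 1 := by
    ext l j
    have h := inner_expand a ha3 (C j) (C l)
    rw [hC, hC, hb3] at h
    rw [Matrix.mul_apply, Matrix.one_apply]
    simp only [hM, Matrix.conjTranspose_apply, Matrix.of_apply]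
    have h2 : ∑ x, C l x * star (C j x) = ∑ i, star (C j i) * C l i :=
      Finset.sum_congr rfl fun _ _ => mul_comm _ _
    rw [h2, ← h]
    rcases eq_or_ne j l with hjl | hjl
    · simp [hjl]
    · simp [hjl, hjl.symm]
  have hMM' : Mᴴ * M = 1 := mul_eq_one_comm.mp hMM
  have hδ : ∀ i k, (∑ j, C j i * star (C j k)) = if k = i then 1 else 0 := by
    intro i k
    have h := congrFun (congrFun hMM' k) i
    rw [Matrix.mul_apply, Matrix.one_apply] at h
    simp only [Matrix.conjTranspose_apply, hM, Matrix.of_apply] at h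
    rw [← h]
    exact Finset.sum_congr rfl fun j _ => mul_comm _ _
  calc ∑ j, b j * (b j)ᴴ
      = ∑ j, (∑ i, C j i • a i) * (∑ k, C j k • a k)ᴴ := by simp_rw [hC]
    _ = ∑ j, ∑ i, ∑ k, (C j i * star (C j k)) • (a i * (a k)ᴴ) := by
        refine Finset.sum_congr rfl fun j _ => ?_
        rw [Matrix.conjTranspose_sum]
        simp only [Matrix.conjTranspose_smul, Finset.sum_mul, Finset.mul_sum,
          Matrix.smul_mul, Matrix.mul_smul, smul_smul]
        rw [Finset.sum_comm]
        exact Finset.sum_congr rfl fun i _ => Finset.sum_congr rfl fun k _ => by rw [mul_comm]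
    _ = ∑ i, ∑ k, (∑ j, C j i * star (C j k)) • (a i * (a k)ᴴ) := by
        rw [Finset.sum_comm]
        refine Finset.sum_congr rfl fun i _ => ?_
        rw [Finset.sum_comm]
        refine Finset.sum_congr rfl fun k _ => ?_
        rw [Finset.sum_smul]
    _ = ∑ i, a i * (a i)ᴴ := by
        simp_rw [hδ]
        simp [ite_smul, Finset.sum_ite_eq]

lemma conjMap_apply {n : ℕ} (u x : Mat n) : conjMap u x = u * x * uᴴ := by
  simp [conjMap, LinearMap.mulLeft, LinearMap.mulRight, mul_assoc]

/-- every vertex-transitive quantum graph is regular. -/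
theorem stmt1 {n : ℕ} (R : Submodule ℂ (Mat n)) (hQG : IsQuantumGraph R)
    (hvt : IsVertexTransitive R) : IsRegular R := by
  obtain ⟨d, a, ha⟩ := exists_onb R
  refine ⟨d, a, ha, ?_⟩
  set D := ∑ i, a i * (a i)ᴴ with hD
  -- D commutes with every element of Stab R
  have hcomm : ∀ u ∈ Stab R, u * D = D * u := by
    rintro u ⟨hu, hmap⟩
    have hsu : star u = uᴴ := rfl
    have huu' : uᴴ * u = 1 := by
      have := (Unitary.mem_iff.mp hu).1
      rwa [hsu] at this
    have huu : u * uᴴ = 1 := by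
      have := (Unitary.mem_iff.mp hu).2
      rwa [hsu] at this
    set b : Fin d → Mat n := fun i => u * a i * uᴴ with hb
    have hbONB : IsONBasis R b := by
      obtain ⟨haR, haspan, ha3⟩ := ha
      refine ⟨fun i => ?_, ?_, fun i j => ?_⟩
      · rw [← hmap]
        exact ⟨a i, haR i, by rw [conjMap_apply]⟩
      · have : Set.range b = ⇑(conjMap u) '' Set.range a := by
          ext x
          simp only [Set.mem_range, Set.mem_image]
          constructor
          · rintro ⟨i, rfl⟩
            exact ⟨a i, ⟨i, rfl⟩, by rw [conjMap_apply]⟩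
          · rintro ⟨y, ⟨i, rfl⟩, rfl⟩
            exact ⟨i, by rw [conjMap_apply]⟩
        rw [this, ← Submodule.map_span, haspan, hmap]
      · have hkey : (b i)ᴴ * b j = u * ((a i)ᴴ * a j) * uᴴ := by
          simp only [hb, Matrix.conjTranspose_mul, Matrix.conjTranspose_conjTranspose]
          calc u * ((a i)ᴴ * uᴴ) * (u * a j * uᴴ)
              = u * (a i)ᴴ * (uᴴ * u) * (a j * uᴴ) := by noncomm_ring
            _ = u * ((a i)ᴴ * a j) * uᴴ := by rw [huu']; noncomm_ring
        rw [hkey, Matrix.trace_mul_cycle, ← mul_assoc, huu', one_mul, ha3]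
    have hsum : ∑ i, b i * (b i)ᴴ = u * D * uᴴ := by
      rw [hD, Finset.mul_sum, Finset.sum_mul]
      refine Finset.sum_congr rfl fun i _ => ?_
      simp only [hb, Matrix.conjTranspose_mul, Matrix.conjTranspose_conjTranspose]
      calc u * a i * uᴴ * (u * ((a i)ᴴ * uᴴ))
          = u * a i * (uᴴ * u) * ((a i)ᴴ * uᴴ) := by noncomm_ring
        _ = u * (a i * (a i)ᴴ) * uᴴ := by rw [huu']; noncomm_ring
    have hDinv : u * D * uᴴ = D := by rw [← hsum]; exact deg_eq ha hbONB
    calc u * D = u * D * (uᴴ * u) := by rw [huu', mul_one]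
      _ = (u * D * uᴴ) * u := by rw [← mul_assoc]
      _ = D * u := by rw [hDinv]
  -- hence D commutes with everything
  have hall : ∀ x : Mat n, x * D = D * x := by
    set T : Submodule ℂ (Mat n) :=
      { carrier := {x | x * D = D * x}
        add_mem' := fun hx hy => by
          simp only [Set.mem_setOf_eq] at *
          rw [add_mul, mul_add, hx, hy]
        zero_mem' := by simp
        smul_mem' := fun c x hx => by
          simp only [Set.mem_setOf_eq] at *
          rw [Matrix.smul_mul, Matrix.mul_smul, hx] } with hT
    have hle : Submodule.span ℂ (Stab R) ≤ T := by
      rw [Submodule.span_le]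
      exact fun u hu => hcomm u hu
    rw [hvt] at hle
    exact fun x => hle (Submodule.mem_top (x := x))
  have hscalar : D ∈ Set.range (Matrix.scalar (Fin n)) := by
    apply Matrix.mem_range_scalar_of_commute_single
    intro i j _
    exact hall _
  obtain ⟨c, hc⟩ := hscalar
  refine ⟨c, ?_⟩
  rw [← hc]
  ext i j
  rcases eq_or_ne i j with h | h <;> simp [h, Matrix.scalar_apply, Matrix.one_apply]

end QG
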